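/- Let F : ℝⁿ → ℝ be differentiable with ω₁-Lipschitz gradient for some ω₁ > 0. Let x, h ∈ ℝⁿ with h ≠ 0 satisfy the sufficient-descent (angle) condition −⟨∇F(x), h⟩ ≥ δ‖∇F(x)‖·‖h‖ for some δ > 0, and set α = −⟨∇F(x), h⟩ / (ω₁‖h‖²). Then F(x) − F(x + α·h) ≥ δ²‖∇F(x)‖² / (2ω₁). -/

import Mathlib

open RealInnerProductSpace

lemma descent_aux (n : ℕ) (ω₁ : ℝ) (hω₁ : 0 < ω₁)
    (F : EuclideanSpace ℝ (Fin n) → ℝ)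
    (hdiff : Differentiable ℝ F)
    (hlip : ∀ x y : EuclideanSpace ℝ (Fin n),
      ‖gradient F x - gradient F y‖ ≤ ω₁ * ‖x - y‖)
    (x v : EuclideanSpace ℝ (Fin n)) :
    F (x + v) ≤ F x + ⟪gradient F x, v⟫ + ω₁ / 2 * ‖v‖ ^ 2 := by
  set φ : ℝ → ℝ := fun t =>
    F (x + t • v) - ⟪gradient F x, v⟫ * t - ω₁ / 2 * ‖v‖ ^ 2 * t ^ 2 with hφ
  have hg : ∀ t : ℝ, HasDerivAt (fun t : ℝ => F (x + t • v))
      (⟪gradient F (x + t • v), v⟫) t := by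
    intro t
    have hc : HasDerivAt (fun t : ℝ => x + t • v) v t := by
      simpa using ((hasDerivAt_id t).smul_const v).const_add x
    have := ((hdiff (x + t • v)).hasGradientAt.hasFDerivAt).comp_hasDerivAt t hc
    simpa [Function.comp_def] using this
  have hφd : ∀ t : ℝ, HasDerivAt φ
      (⟪gradient F (x + t • v), v⟫ - ⟪gradient F x, v⟫ - ω₁ * ‖v‖ ^ 2 * t) t := by
    intro t
    have h1 : HasDerivAt (fun t : ℝ => ⟪gradient F x, v⟫ * t) ⟪gradient F x, v⟫ t := by
      simpa using (hasDerivAt_id t).const_mul ⟪gradient F x, v⟫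
    have h2 : HasDerivAt (fun t : ℝ => ω₁ / 2 * ‖v‖ ^ 2 * t ^ 2)
        (ω₁ * ‖v‖ ^ 2 * t) t := by
      have := (hasDerivAt_pow 2 t).const_mul (ω₁ / 2 * ‖v‖ ^ 2)
      refine this.congr_deriv ?_
      ring
    exact ((hg t).sub h1).sub h2
  have hanti : AntitoneOn φ (Set.Icc (0:ℝ) 1) := by
    apply antitoneOn_of_deriv_nonpos (convex_Icc 0 1)
    · exact fun t _ => (hφd t).continuousAt.continuousWithinAt
    · exact fun t _ => (hφd t).differentiableAt.differentiableWithinAt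
    · intro t ht
      rw [interior_Icc] at ht
      rw [(hφd t).deriv]
      have hineq : ⟪gradient F (x + t • v) - gradient F x, v⟫ ≤ ω₁ * ‖v‖ ^ 2 * t := by
        calc ⟪gradient F (x + t • v) - gradient F x, v⟫
            ≤ ‖gradient F (x + t • v) - gradient F x‖ * ‖v‖ := real_inner_le_norm _ _
          _ ≤ (ω₁ * ‖x + t • v - x‖) * ‖v‖ := by
              have := hlip (x + t • v) x
              have hv : (0:ℝ) ≤ ‖v‖ := norm_nonneg _
              nlinarith [norm_nonneg (gradient F (x + t • v) - gradient F x)]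
          _ = ω₁ * ‖v‖ ^ 2 * t := by
              rw [add_sub_cancel_left, norm_smul, Real.norm_eq_abs,
                abs_of_pos ht.1]
              ring
      rw [inner_sub_left] at hineq
      linarith
  have key := hanti (Set.left_mem_Icc.2 zero_le_one) (Set.right_mem_Icc.2 zero_le_one)
    zero_le_one
  simp only [hφ, one_smul, zero_smul, add_zero, mul_one, one_pow, mul_zero,
    sub_zero] at key
  norm_num at key ⊢
  linarith

/-- Equation (f.decrease): per-step decrease bound under the sufficient-descent
(angle) condition `-⟪∇F x, h⟫ ≥ δ ‖∇F x‖ ‖h‖`. -/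
theorem stmt_2 (n : ℕ) (ω₁ : ℝ) (hω₁ : 0 < ω₁)
    (F : EuclideanSpace ℝ (Fin n) → ℝ)
    (hdiff : Differentiable ℝ F)
    (hlip : ∀ x y : EuclideanSpace ℝ (Fin n),
      ‖gradient F x - gradient F y‖ ≤ ω₁ * ‖x - y‖)
    (x h : EuclideanSpace ℝ (Fin n)) (hh : h ≠ 0)
    (δ : ℝ) (hδ : 0 < δ)
    (hangle : -⟪gradient F x, h⟫ ≥ δ * (‖gradient F x‖ * ‖h‖))
    (α : ℝ) (hα : α = -⟪gradient F x, h⟫ / (ω₁ * ‖h‖ ^ 2)) :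
    F x - F (x + α • h) ≥ δ ^ 2 * ‖gradient F x‖ ^ 2 / (2 * ω₁) := by
  have hdesc := descent_aux n ω₁ hω₁ F hdiff hlip x (α • h)
  set g := gradient F x
  set I : ℝ := -⟪g, h⟫ with hI
  have hhn : (0:ℝ) < ‖h‖ := norm_pos_iff.2 hh
  have hIpos : 0 ≤ I := le_trans (by positivity) hangle
  have hinner : ⟪g, α • h⟫ = α * ⟪g, h⟫ := real_inner_smul_right g h α
  have hns : ‖α • h‖ ^ 2 = α ^ 2 * ‖h‖ ^ 2 := by
    rw [norm_smul, mul_pow, Real.norm_eq_abs, sq_abs]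
  rw [hinner, hns] at hdesc
  have hαv : α = I / (ω₁ * ‖h‖ ^ 2) := hα
  have hden : (0:ℝ) < ω₁ * ‖h‖ ^ 2 := by positivity
  have hdec : F x - F (x + α • h) ≥ I ^ 2 / (2 * (ω₁ * ‖h‖ ^ 2)) := by
    have hgh : (⟪g, h⟫ : ℝ) = -I := by rw [hI]; ring
    have : α * ⟪g, h⟫ + ω₁ / 2 * (α ^ 2 * ‖h‖ ^ 2) = -(I ^ 2 / (2 * (ω₁ * ‖h‖ ^ 2))) := by
      rw [hgh, hαv]
      field_simp
      ring
    linarith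
  have hIsq : I ^ 2 ≥ (δ * (‖g‖ * ‖h‖)) ^ 2 := by
    apply pow_le_pow_left₀ (by positivity) hangle
  calc F x - F (x + α • h) ≥ I ^ 2 / (2 * (ω₁ * ‖h‖ ^ 2)) := hdec
    _ ≥ (δ * (‖g‖ * ‖h‖)) ^ 2 / (2 * (ω₁ * ‖h‖ ^ 2)) := by
        apply div_le_div_of_nonneg_right hIsq
        positivity
    _ = δ ^ 2 * ‖g‖ ^ 2 / (2 * ω₁) := by
        field_simp
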